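/- Let α_n : (Z/2)^n → Z/2 be defined by α_n(x) = Σ_{i<j<k} x_i x_j x_k + Σ_{i<j} x_i x_j + Σ_i x_i. Then α_n(x) = 0 if and only if the Hamming weight of x (the number of nonzero coordinates) is congruent to 0 modulo 4. -/

import Mathlib

def cubicFormOn (n : ℕ) (x : Fin n → ZMod 2) : ZMod 2 :=
  (∑ t ∈ Finset.univ.filter
      (fun t : Fin n × Fin n × Fin n => t.1 < t.2.1 ∧ t.2.1 < t.2.2),
      x t.1 * x t.2.1 * x t.2.2)
  + (∑ t ∈ Finset.univ.filter (fun t : Fin n × Fin n => t.1 < t.2),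
      x t.1 * x t.2)
  + ∑ i, x i

open Finset

lemma aux_choose (w : ℕ) : ((w % 4 ≤ 1) ↔ w.choose 2 % 2 = 0) ∧ ((w % 4 = 3) ↔ w.choose 3 % 2 = 1) := by
  induction w with
  | zero => decide
  | succ w ih =>
    have h2 : (w+1).choose 2 = w.choose 1 + w.choose 2 := Nat.choose_succ_succ w 1
    have h3 : (w+1).choose 3 = w.choose 2 + w.choose 3 := Nat.choose_succ_succ w 2
    have h1 : w.choose 1 = w := Nat.choose_one_right w
    omega

lemma card_pairs {ι : Type*} [LinearOrder ι] [DecidableEq ι] (S : Finset ι) :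
    ((S ×ˢ S).filter (fun t => t.1 < t.2)).card = S.card.choose 2 := by
  induction S using Finset.induction_on_max with
  | empty => simp
  | insert a s ha ih =>
    have hans : a ∉ s := fun h => lt_irrefl a (ha a h)
    have hset : ((insert a s ×ˢ insert a s).filter (fun t => t.1 < t.2)) =
        ((s ×ˢ s).filter (fun t => t.1 < t.2)) ∪ s.image (fun b => (b, a)) := by
      ext ⟨i, j⟩
      simp only [mem_filter, mem_product, mem_insert, mem_union, mem_image]
      constructor
      · rintro ⟨⟨hi | hi, hj | hj⟩, hij⟩
        · exact absurd hij (by simp [hi, hj])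
        · exact absurd hij (by subst hi; exact not_lt.2 (le_of_lt (ha j hj)))
        · exact Or.inr ⟨i, hi, by simp [hj]⟩
        · exact Or.inl ⟨⟨hi, hj⟩, hij⟩
      · rintro (⟨⟨hi, hj⟩, hij⟩ | ⟨b, hb, hbij⟩)
        · exact ⟨⟨Or.inr hi, Or.inr hj⟩, hij⟩
        · obtain ⟨rfl, rfl⟩ := Prod.mk.injEq .. ▸ hbij
          exact ⟨⟨Or.inr hb, Or.inl rfl⟩, ha _ hb⟩
    rw [hset, card_union_of_disjoint, ih, card_image_of_injective _ (fun b c h => (Prod.mk.injEq .. ▸ h).1),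
      card_insert_of_notMem hans, Nat.choose_succ_succ, Nat.choose_one_right, Nat.add_comm]
    · rw [disjoint_right]
      rintro ⟨i, j⟩ hmem hmem'
      simp only [mem_image] at hmem
      obtain ⟨b, hb, hbij⟩ := hmem
      obtain ⟨rfl, rfl⟩ := Prod.mk.injEq .. ▸ hbij
      simp only [mem_filter, mem_product] at hmem'
      exact hans hmem'.1.2

lemma card_triples {ι : Type*} [LinearOrder ι] [DecidableEq ι] (S : Finset ι) :
    ((S ×ˢ S ×ˢ S).filter (fun t => t.1 < t.2.1 ∧ t.2.1 < t.2.2)).card = S.card.choose 3 := by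
  induction S using Finset.induction_on_max with
  | empty => simp
  | insert a s ha ih =>
    have hans : a ∉ s := fun h => lt_irrefl a (ha a h)
    have hset : ((insert a s ×ˢ insert a s ×ˢ insert a s).filter
          (fun t => t.1 < t.2.1 ∧ t.2.1 < t.2.2)) =
        ((s ×ˢ s ×ˢ s).filter (fun t => t.1 < t.2.1 ∧ t.2.1 < t.2.2)) ∪
          (((s ×ˢ s).filter (fun t => t.1 < t.2)).image (fun t => (t.1, t.2, a))) := by
      ext ⟨i, j, k⟩
      simp only [mem_filter, mem_product, mem_insert, mem_union, mem_image]
      constructor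
      · rintro ⟨⟨hi, hj, hk⟩, hij, hjk⟩
        have hi' : i ∈ s := by
          rcases hi with rfl | hi
          · rcases hj with rfl | hj
            · exact absurd hij (lt_irrefl _)
            · exact absurd hij (not_lt.2 (le_of_lt (ha j hj)))
          · exact hi
        have hj' : j ∈ s := by
          rcases hj with rfl | hj
          · rcases hk with rfl | hk
            · exact absurd hjk (lt_irrefl _)
            · exact absurd hjk (not_lt.2 (le_of_lt (ha k hk)))
          · exact hj
        rcases hk with rfl | hk
        · exact Or.inr ⟨(i, j), ⟨⟨hi', hj'⟩, hij⟩, rfl⟩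
        · exact Or.inl ⟨⟨hi', hj', hk⟩, hij, hjk⟩
      · rintro (⟨⟨hi, hj, hk⟩, h⟩ | ⟨⟨b, c⟩, ⟨⟨hb, hc⟩, hbc⟩, heq⟩)
        · exact ⟨⟨Or.inr hi, Or.inr hj, Or.inr hk⟩, h⟩
        · obtain ⟨rfl, rfl, rfl⟩ : b = i ∧ c = j ∧ a = k := by
            simpa [Prod.ext_iff] using heq
          exact ⟨⟨Or.inr hb, Or.inr hc, Or.inl rfl⟩, hbc, ha _ hc⟩
    rw [hset, card_union_of_disjoint, ih,
      card_image_of_injective _ (fun b c h => by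
        obtain ⟨h1, h2, -⟩ : b.1 = c.1 ∧ b.2 = c.2 ∧ a = a := by simpa [Prod.ext_iff] using h
        exact Prod.ext h1 h2),
      card_pairs, card_insert_of_notMem hans, Nat.choose_succ_succ]
    · ring
    · rw [disjoint_right]
      rintro ⟨i, j, k⟩ hmem hmem'
      simp only [mem_image] at hmem
      obtain ⟨⟨b, c⟩, _, heq⟩ := hmem
      obtain ⟨rfl, rfl, rfl⟩ : b = i ∧ c = j ∧ a = k := by simpa [Prod.ext_iff] using heq
      simp only [mem_filter, mem_product] at hmem'
      exact hans hmem'.1.2.2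

theorem stmt_3 (n : ℕ) (x : Fin n → ZMod 2) :
    cubicFormOn n x = 0 ↔ (Finset.univ.filter (fun i => x i = 1)).card % 4 = 0 := by
  classical
  set S : Finset (Fin n) := Finset.univ.filter (fun i => x i = 1) with hS
  have hmem : ∀ i, i ∈ S ↔ x i = 1 := fun i => by simp [hS]
  have hx0 : ∀ i, i ∉ S → x i = 0 := by
    intro i hi
    have : x i ≠ 1 := fun h => hi ((hmem i).2 h)
    revert this
    have : ∀ a : ZMod 2, a ≠ 1 → a = 0 := by decide
    exact this (x i)
  have hT : (∑ t ∈ Finset.univ.filter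
      (fun t : Fin n × Fin n × Fin n => t.1 < t.2.1 ∧ t.2.1 < t.2.2),
      x t.1 * x t.2.1 * x t.2.2) = (S.card.choose 3 : ZMod 2) := by
    rw [← Finset.sum_subset
      (Finset.filter_subset_filter _ (Finset.subset_univ (S ×ˢ S ×ˢ S)))
      (fun t ht hts => by
        simp only [mem_filter, mem_product] at ht hts
        have hnot : ¬(t.1 ∈ S ∧ t.2.1 ∈ S ∧ t.2.2 ∈ S) := fun hA => hts ⟨hA, ht.2⟩
        rcases not_and_or.1 hnot with h | h
        · rw [hx0 _ h]; ring
        rcases not_and_or.1 h with h | h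
        · rw [hx0 _ h]; ring
        · rw [hx0 _ h]; ring)]
    rw [← card_triples S]
    rw [Finset.sum_congr rfl (fun t ht => by
      simp only [mem_filter, mem_product, hmem] at ht
      rw [ht.1.1, ht.1.2.1, ht.1.2.2])]
    simp
  have hP : (∑ t ∈ Finset.univ.filter (fun t : Fin n × Fin n => t.1 < t.2),
      x t.1 * x t.2) = (S.card.choose 2 : ZMod 2) := by
    rw [← Finset.sum_subset
      (Finset.filter_subset_filter _ (Finset.subset_univ (S ×ˢ S)))
      (fun t ht hts => by
        simp only [mem_filter, mem_product] at ht hts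
        have hnot : ¬(t.1 ∈ S ∧ t.2 ∈ S) := fun hA => hts ⟨hA, ht.2⟩
        rcases not_and_or.1 hnot with h | h
        · rw [hx0 _ h]; ring
        · rw [hx0 _ h]; ring)]
    rw [← card_pairs S]
    rw [Finset.sum_congr rfl (fun t ht => by
      simp only [mem_filter, mem_product, hmem] at ht
      rw [ht.1.1, ht.1.2])]
    simp
  have hL : (∑ i, x i) = (S.card : ZMod 2) := by
    rw [← Finset.sum_subset (Finset.subset_univ S) (fun i _ hi => hx0 i hi)]
    rw [Finset.sum_congr rfl (fun i hi => (hmem i).1 hi)]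
    simp
  rw [cubicFormOn, hT, hP, hL]
  rw [show (S.card.choose 3 : ZMod 2) + (S.card.choose 2 : ZMod 2) + (S.card : ZMod 2)
      = ((S.card.choose 3 + S.card.choose 2 + S.card : ℕ) : ZMod 2) by push_cast; ring]
  rw [ZMod.natCast_eq_zero_iff]
  have := aux_choose S.card
  omega
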